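/- Let A be a C*-algebra with center Z(A), and let ψ_1, …, ψ_n and φ_1, …, φ_k be elements of A such that ψ_l* φ_j ∈ Z(A) for all l, j, (Σ_{l=1}^n ψ_l ψ_l*)·φ_j = φ_j for every j, and (Σ_{j=1}^k φ_j φ_j*)·ψ_l = ψ_l for every l. Then Σ_{l=1}^n ψ_l a ψ_l* = Σ_{j=1}^k φ_j a φ_j* for every a ∈ A. (The inner endomorphism induced by a finitely generated Hilbert Z(A)-bimodule in A does not depend on the choice of generators.) -/

import Mathlib

/-- In a C*-algebra `A` with centre `Z(A)`, if `ψ_l* φ_j ∈ Z(A)` for all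
`l, j`, `(Σ_l ψ_l ψ_l*) φ_j = φ_j` for every `j`, and `(Σ_j φ_j φ_j*) ψ_l = ψ_l` for
every `l`, then `Σ_l ψ_l a ψ_l* = Σ_j φ_j a φ_j*` for every `a ∈ A`: the inner
endomorphism does not depend on the choice of generators. -/
theorem innerEndo_independent_of_generators
    {A : Type*} [NonUnitalNormedRing A] [StarRing A] [CStarRing A]
    [NormedSpace ℂ A] [IsScalarTower ℂ A A] [SMulCommClass ℂ A A]
    [StarModule ℂ A] [CompleteSpace A]
    {n k : ℕ} (ψ : Fin n → A) (φ : Fin k → A)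
    (hcen : ∀ l j, star (ψ l) * φ j ∈ Set.center A)
    (h1 : ∀ j, (∑ l, ψ l * star (ψ l)) * φ j = φ j)
    (h2 : ∀ l, (∑ j, φ j * star (φ j)) * ψ l = ψ l) :
    ∀ a : A, ∑ l, ψ l * a * star (ψ l) = ∑ j, φ j * a * star (φ j) := by
  intro a
  -- star(ψ_l* φ_j) = φ_j* ψ_l is central, hence commutes with a
  have hcomm : ∀ l j, (star (φ j) * ψ l) * a = a * (star (φ j) * ψ l) := by
    intro l j
    have : star (star (ψ l) * φ j) ∈ Set.center A :=
      Set.star_mem_center (hcen l j)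
    simpa [star_mul] using (this.comm a).eq
  -- star of h1: φ_j* * Σ ψ_l ψ_l* = φ_j*
  have h1' : ∀ j, star (φ j) * (∑ l, ψ l * star (ψ l)) = star (φ j) := by
    intro j
    have := congrArg star (h1 j)
    simpa [star_mul, star_sum] using this
  calc ∑ l, ψ l * a * star (ψ l)
      = ∑ l, ((∑ j, φ j * star (φ j)) * ψ l) * a * star (ψ l) := by
        simp only [h2]
    _ = ∑ l, ∑ j, φ j * ((star (φ j) * ψ l) * a) * star (ψ l) := by
        refine Finset.sum_congr rfl fun l _ => ?_
        rw [Finset.sum_mul, Finset.sum_mul, Finset.sum_mul]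
        exact Finset.sum_congr rfl fun j _ => by simp only [mul_assoc]
    _ = ∑ j, ∑ l, φ j * a * (star (φ j) * (ψ l * star (ψ l))) := by
        rw [Finset.sum_comm]
        refine Finset.sum_congr rfl fun j _ => Finset.sum_congr rfl fun l _ => ?_
        rw [hcomm l j]; simp only [mul_assoc]
    _ = ∑ j, φ j * a * (star (φ j) * ∑ l, ψ l * star (ψ l)) := by
        refine Finset.sum_congr rfl fun j _ => ?_
        rw [Finset.mul_sum, Finset.mul_sum]
    _ = ∑ j, φ j * a * star (φ j) := by
        simp only [h1']
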